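/- Let μ1, μ4, μ5, μ6, λ1, λ2 ∈ ℝ with λ1 ≠ 0. Let A be a real symmetric 2×2 matrix, Ω a real skew-symmetric 2×2 matrix, d, h ∈ ℝ³, s ∈ ℝ, and write d̂ = (d₁, d₂), ĥ = (h₁, h₂) ∈ ℝ². Suppose N ∈ ℝ³ satisfies λ1 N = −λ2 (Ad̂, 0) − (h + s d) + λ2 (d̂ᵀAd̂) d, and set N̂ = (N₁, N₂). Then μ1 (d̂ᵀAd̂)² + (μ5 + μ6)|Ad̂|² + λ1 ⟨N̂, Ωd̂⟩ − λ2 ⟨N̂, Ad̂⟩ + λ2 ⟨Ad̂, Ωd̂⟩ − ⟨(λ2/λ1) Ad̂ − Ωd̂, ĥ⟩ − (λ2/λ1) s (d̂ᵀAd̂) = (μ1 − λ2²/λ1)(d̂ᵀAd̂)² + (μ5 + μ6 + λ2²/λ1)|Ad̂|². -/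
import Mathlib


open Finset Matrix

/-- Embedding of `ℝ²` into `ℝ³` with vanishing third component. -/
def emb (v : Fin 2 → ℝ) (k : Fin 3) : ℝ :=
  if h : (k : ℕ) < 2 then v ⟨k, h⟩ else 0

/-- **The pointwise cancellation identity at the heart of the energy dissipation
law of the Ericksen–Leslie system.**  If
`lam1 N = −lam2 (Ad̂,0) − (h + s d) + lam2 (d̂ᵀAd̂) d` with `A` symmetric and `Ω`
skew-symmetric, then
`μ1 (d̂ᵀAd̂)² + (μ5+μ6)|Ad̂|² + lam1⟨N̂,Ωd̂⟩ − lam2⟨N̂,Ad̂⟩ + lam2⟨Ad̂,Ωd̂⟩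
  − ⟨(lam2/lam1)Ad̂ − Ωd̂, ĥ⟩ − (lam2/lam1) s (d̂ᵀAd̂)
  = (μ1 − lam2²/lam1)(d̂ᵀAd̂)² + (μ5+μ6+lam2²/lam1)|Ad̂|²`. -/
theorem leslie_dissipation_cancellation
    (μ1 μ4 μ5 μ6 lam1 lam2 : ℝ) (hlam1 : lam1 ≠ 0)
    (A Ω : Matrix (Fin 2) (Fin 2) ℝ)
    (hA : A.IsSymm) (hΩ : Ωᵀ = -Ω)
    (d h N : Fin 3 → ℝ) (s : ℝ)
    (hN : ∀ k : Fin 3, lam1 * N k =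
      - lam2 * emb (fun i => ∑ j, A i j * d (Fin.castSucc j)) k
      - (h k + s * d k)
      + lam2 * (∑ i, ∑ j, A i j * d (Fin.castSucc i) * d (Fin.castSucc j)) * d k) :
    μ1 * (∑ i, ∑ j, A i j * d (Fin.castSucc i) * d (Fin.castSucc j)) ^ 2
      + (μ5 + μ6) * (∑ i, (∑ j, A i j * d (Fin.castSucc j)) ^ 2)
      + lam1 * (∑ i, N (Fin.castSucc i) * (∑ j, Ω i j * d (Fin.castSucc j)))
      - lam2 * (∑ i, N (Fin.castSucc i) * (∑ j, A i j * d (Fin.castSucc j)))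
      + lam2 * (∑ i, (∑ j, A i j * d (Fin.castSucc j)) * (∑ j, Ω i j * d (Fin.castSucc j)))
      - (∑ i, ((lam2 / lam1) * (∑ j, A i j * d (Fin.castSucc j))
            - (∑ j, Ω i j * d (Fin.castSucc j))) * h (Fin.castSucc i))
      - (lam2 / lam1) * s
          * (∑ i, ∑ j, A i j * d (Fin.castSucc i) * d (Fin.castSucc j))
    = (μ1 - lam2 ^ 2 / lam1)
          * (∑ i, ∑ j, A i j * d (Fin.castSucc i) * d (Fin.castSucc j)) ^ 2
      + (μ5 + μ6 + lam2 ^ 2 / lam1)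
          * (∑ i, (∑ j, A i j * d (Fin.castSucc j)) ^ 2) := by
  have hA01 : A 1 0 = A 0 1 := by
    have := congr_fun (congr_fun hA.eq 0) 1; simpa [Matrix.transpose_apply] using this
  have hΩ00 : Ω 0 0 = 0 := by
    have := congr_fun (congr_fun hΩ 0) 0; simp [Matrix.transpose_apply] at this; linarith
  have hΩ11 : Ω 1 1 = 0 := by
    have := congr_fun (congr_fun hΩ 1) 1; simp [Matrix.transpose_apply] at this; linarith
  have hΩ10 : Ω 1 0 = -Ω 0 1 := by
    have := congr_fun (congr_fun hΩ 0) 1; simpa [Matrix.transpose_apply] using this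
  have hN0 := hN 0
  have hN1 := hN 1
  simp only [Fin.sum_univ_two, emb, Fin.isValue] at hN0 hN1 ⊢
  norm_num [show ((0:Fin 3):ℕ) < 2 from by norm_num, show ((1:Fin 3):ℕ) < 2 from by norm_num] at hN0 hN1
  have h0 : Fin.castSucc (0 : Fin 2) = (0 : Fin 3) := rfl
  have h1 : Fin.castSucc (1 : Fin 2) = (1 : Fin 3) := rfl
  rw [h0, h1]
  simp only [hA01, hΩ00, hΩ11, hΩ10] at hN0 hN1 ⊢
  field_simp
  linear_combination (lam1 * (Ω 0 1 * d 1) - lam2 * (A 0 0 * d 0 + A 0 1 * d 1)) * hN0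
    + (lam1 * (-Ω 0 1 * d 0) - lam2 * (A 0 1 * d 0 + A 1 1 * d 1)) * hN1
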